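/- Let R be a commutative ring and a, b ∈ R. Then there exists a unique formal power series w ∈ R[[t]] with zero constant coefficient satisfying the equation w = t³ + a·t·w² + b·w³ in R[[t]]. Moreover this w has vanishing coefficients in degrees 1 and 2 and coefficient 1 in degree 3, i.e., w = t³·(1 + A₁t + A₂t² + ⋯) for suitable A_i ∈ R. -/

import Mathlib

open PowerSeries

namespace WFE

variable {R : Type*} [CommRing R]

noncomputable def F (a b : R) (w : PowerSeries R) : PowerSeries R :=
  X ^ 3 + C a * X * w ^ 2 + C b * w ^ 3

lemma constF (a b : R) {w : PowerSeries R} (h : constantCoeff w = 0) :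
    constantCoeff (F a b w) = 0 := by
  simp [F, h]

lemma key (a b : R) {n : ℕ} {u v : PowerSeries R} (hu : constantCoeff u = 0)
    (hv : constantCoeff v = 0) (h : (X : PowerSeries R) ^ n ∣ u - v) :
    (X : PowerSeries R) ^ (n + 1) ∣ F a b u - F a b v := by
  have hm : (X : PowerSeries R) ∣ (C a * X * (u + v) + C b * (u^2 + u*v + v^2)) := by
    rw [X_dvd_iff]
    simp [hu, hv]
  have hE : F a b u - F a b v
      = (u - v) * (C a * X * (u + v) + C b * (u^2 + u*v + v^2)) := by
    simp only [F]; ring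
  rw [hE, pow_succ]
  exact mul_dvd_mul h hm

lemma eq_of_forall_dvd {u v : PowerSeries R}
    (h : ∀ n : ℕ, (X : PowerSeries R) ^ n ∣ u - v) : u = v := by
  have : u - v = 0 := by
    ext k
    have := (X_pow_dvd_iff.mp (h (k + 1))) k (Nat.lt_succ_self k)
    simpa using this
  exact sub_eq_zero.mp this

noncomputable def s (a b : R) : ℕ → PowerSeries R
  | 0 => 0
  | n + 1 => F a b (s a b n)

lemma const_s (a b : R) : ∀ n, constantCoeff (s a b n) = 0
  | 0 => by simp [s]
  | n + 1 => constF a b (const_s a b n)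

lemma dvd_s (a b : R) : ∀ n, (X : PowerSeries R) ^ n ∣ s a b (n + 1) - s a b n
  | 0 => by simp
  | n + 1 => key a b (const_s a b (n + 1)) (const_s a b n) (dvd_s a b n)

lemma dvd_s' (a b : R) (n : ℕ) : ∀ k, (X : PowerSeries R) ^ n ∣ s a b (n + k) - s a b n
  | 0 => by simp
  | k + 1 => by
    have h1 : (X : PowerSeries R) ^ n ∣ s a b (n + k + 1) - s a b (n + k) :=
      dvd_trans (pow_dvd_pow X (Nat.le_add_right n k)) (dvd_s a b (n + k))
    have h2 := dvd_s' a b n k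
    have heq : s a b (n + (k + 1)) - s a b n
        = (s a b (n + k + 1) - s a b (n + k)) + (s a b (n + k) - s a b n) := by
      rw [show n + (k + 1) = n + k + 1 by ring]; ring
    rw [heq]
    exact dvd_add h1 h2

lemma dvd_s'' (a b : R) {n m : ℕ} (h : n ≤ m) :
    (X : PowerSeries R) ^ n ∣ s a b m - s a b n := by
  obtain ⟨k, rfl⟩ := Nat.exists_eq_add_of_le h
  exact dvd_s' a b n k

noncomputable def wlim (a b : R) : PowerSeries R :=
  PowerSeries.mk fun k => coeff k (s a b (k + 1))

lemma dvd_wlim (a b : R) (n : ℕ) : (X : PowerSeries R) ^ n ∣ wlim a b - s a b n := by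
  rw [X_pow_dvd_iff]
  intro k hk
  have h := (X_pow_dvd_iff.mp (dvd_s'' a b (show k + 1 ≤ n from hk))) k (Nat.lt_succ_self k)
  rw [map_sub] at h ⊢
  simp only [wlim, coeff_mk]
  have : coeff k (s a b n) = coeff k (s a b (k + 1)) := sub_eq_zero.mp h
  rw [this]; ring

lemma const_wlim (a b : R) : constantCoeff (wlim a b) = 0 := by
  have h : coeff 0 (wlim a b) = coeff 0 (s a b 1) := by
    simp only [wlim, coeff_mk]
  rw [← coeff_zero_eq_constantCoeff, h, coeff_zero_eq_constantCoeff]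
  exact const_s a b 1

lemma fix_wlim (a b : R) : wlim a b = F a b (wlim a b) := by
  apply eq_of_forall_dvd
  intro n
  apply dvd_trans (pow_dvd_pow X (Nat.le_succ n))
  have h1 : (X : PowerSeries R) ^ (n + 1) ∣ wlim a b - s a b (n + 1) := dvd_wlim a b (n + 1)
  have h2 : (X : PowerSeries R) ^ (n + 1) ∣ F a b (s a b n) - F a b (wlim a b) :=
    key a b (const_s a b n) (const_wlim a b) (by
      have := dvd_wlim a b n
      have h' : s a b n - wlim a b = -(wlim a b - s a b n) := by ring
      rw [h']
      exact dvd_neg.mpr this)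
  have heq : wlim a b - F a b (wlim a b)
      = (wlim a b - s a b (n + 1)) + (F a b (s a b n) - F a b (wlim a b)) := by
    simp only [s]; ring
  rw [heq]
  exact dvd_add h1 h2

end WFE

theorem existsUnique_weierstrass_formal_expansion {R : Type*} [CommRing R] (a b : R) :
    (∃! w : PowerSeries R, PowerSeries.constantCoeff w = 0 ∧
        w = PowerSeries.X ^ 3 + PowerSeries.C a * PowerSeries.X * w ^ 2
            + PowerSeries.C b * w ^ 3) ∧
      ∀ w : PowerSeries R, PowerSeries.constantCoeff w = 0 →
        w = PowerSeries.X ^ 3 + PowerSeries.C a * PowerSeries.X * w ^ 2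
            + PowerSeries.C b * w ^ 3 →
        PowerSeries.coeff 1 w = 0 ∧ PowerSeries.coeff 2 w = 0 ∧
          PowerSeries.coeff 3 w = 1 := by
  constructor
  · refine ⟨WFE.wlim a b, ⟨WFE.const_wlim a b, ?_⟩, ?_⟩
    · have := WFE.fix_wlim a b
      rw [WFE.F] at this
      exact this
    rintro w' ⟨hc, heq⟩
    apply WFE.eq_of_forall_dvd
    intro n
    induction n with
    | zero => simp
    | succ n ih =>
      have h := WFE.key a b hc (WFE.const_wlim a b) ih
      have e1 : WFE.F a b w' = w' := by rw [WFE.F]; exact heq.symm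
      have e2 : WFE.F a b (WFE.wlim a b) = WFE.wlim a b := (WFE.fix_wlim a b).symm
      rwa [e1, e2] at h
  · intro w hc heq
    have h1 : (X : PowerSeries R) ∣ w := PowerSeries.X_dvd_iff.mpr hc
    have hA : (X : PowerSeries R) ^ 3 ∣ PowerSeries.C a * PowerSeries.X * w ^ 2 := by
      have hXw : (X : PowerSeries R) ^ 3 ∣ PowerSeries.X * w ^ 2 := by
        have h' := mul_dvd_mul (dvd_refl (X : PowerSeries R)) (pow_dvd_pow_of_dvd h1 2)
        have e : (X : PowerSeries R) * X ^ 2 = X ^ 3 := by ring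
        rwa [e] at h'
      rw [show PowerSeries.C a * PowerSeries.X * w ^ 2
          = PowerSeries.C a * (PowerSeries.X * w ^ 2) from by ring]
      exact Dvd.dvd.mul_left hXw _
    have hB : (X : PowerSeries R) ^ 3 ∣ PowerSeries.C b * w ^ 3 :=
      Dvd.dvd.mul_left (pow_dvd_pow_of_dvd h1 3) _
    have hc1 : PowerSeries.coeff 1 w = 0 := by
      rw [heq, map_add, map_add, (PowerSeries.X_pow_dvd_iff.mp hA) 1 (by norm_num),
        (PowerSeries.X_pow_dvd_iff.mp hB) 1 (by norm_num), PowerSeries.coeff_X_pow]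
      norm_num
    have hc2 : PowerSeries.coeff 2 w = 0 := by
      rw [heq, map_add, map_add, (PowerSeries.X_pow_dvd_iff.mp hA) 2 (by norm_num),
        (PowerSeries.X_pow_dvd_iff.mp hB) 2 (by norm_num), PowerSeries.coeff_X_pow]
      norm_num
    have h2 : (X : PowerSeries R) ^ 2 ∣ w := by
      rw [PowerSeries.X_pow_dvd_iff]
      intro m hm
      interval_cases m
      · simpa using hc
      · exact hc1
    have h4w2 : (X : PowerSeries R) ^ 4 ∣ w ^ 2 := by
      have := pow_dvd_pow_of_dvd h2 2
      rwa [show ((X : PowerSeries R) ^ 2) ^ 2 = X ^ 4 from by ring] at this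
    have hA4 : (X : PowerSeries R) ^ 4 ∣ PowerSeries.C a * PowerSeries.X * w ^ 2 :=
      dvd_trans h4w2 (Dvd.intro_left _ rfl)
    have hB4 : (X : PowerSeries R) ^ 4 ∣ PowerSeries.C b * w ^ 3 := by
      have h6 : (X : PowerSeries R) ^ 6 ∣ w ^ 3 := by
        have := pow_dvd_pow_of_dvd h2 3
        rwa [show ((X : PowerSeries R) ^ 2) ^ 3 = X ^ 6 from by ring] at this
      exact Dvd.dvd.mul_left (dvd_trans (pow_dvd_pow X (by norm_num)) h6) _
    refine ⟨hc1, hc2, ?_⟩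
    rw [heq, map_add, map_add, (PowerSeries.X_pow_dvd_iff.mp hA4) 3 (by norm_num),
      (PowerSeries.X_pow_dvd_iff.mp hB4) 3 (by norm_num), PowerSeries.coeff_X_pow]
    norm_num
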